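/- arXiv:1512.04051 — 2 statements merged into one kernel-verified Lean document; each statement's English description precedes it below -/
import Mathlib

section
/- Let F be a finite set, q : F → ℝ with q_f ≥ 0 for all f, s⁰ > 0, λ⁰ ≥ 0, η < 0, φ : F → ℝ, and θ : F → ℝ with 0 ≤ θ_f ≤ 1 for every f. Suppose the KKT complementarity condition holds at the anchor point for every trader f ∈ F. Then for every pair of traders f, g ∈ F with q_f > 0 and q_g = 0 one has φ_f ≤ λ⁰ ≤ φ_g; in particular, if both F⁺ = {f : q_f > 0} and F⁰ = {f : q_f = 0} are nonempty, then max_{f∈F⁺} φ_f ≤ min_{g∈F⁰} φ_g, so the admissible anchor-price range [max_{F⁺} φ, min_{F⁰} φ] is nonempty. -/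
/-- With market power parameters in [0,1] and the KKT conditions
    at the anchor point, every supplying trader's marginal cost is at most λ⁰,
    which is at most every non-supplying trader's marginal cost; hence the
    admissible anchor-price range [max_{F⁺} φ, min_{F⁰} φ] is nonempty. -/
theorem stmt_6 {F : Type*} [Fintype F]
    (q φ θ : F → ℝ) (hq : ∀ f, 0 ≤ q f)
    (s0 lam0 eta : ℝ) (hs0 : 0 < s0) (hlam : 0 ≤ lam0) (heta : eta < 0)
    (hθ : ∀ f, 0 ≤ θ f ∧ θ f ≤ 1)
    (hkkt : ∀ f, -lam0 - θ f * (lam0 / (s0 * eta)) * q f + φ f ≥ 0 ∧ q f ≥ 0 ∧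
      (-lam0 - θ f * (lam0 / (s0 * eta)) * q f + φ f) * q f = 0) :
    (∀ f g, 0 < q f → q g = 0 → φ f ≤ lam0 ∧ lam0 ≤ φ g) ∧
      ∀ (h1 : (Finset.univ.filter fun f => 0 < q f).Nonempty)
        (h2 : (Finset.univ.filter fun f => q f = 0).Nonempty),
        (Finset.univ.filter fun f => 0 < q f).sup' h1 φ ≤
          (Finset.univ.filter fun f => q f = 0).inf' h2 φ := by
  have key : ∀ f, 0 < q f → φ f ≤ lam0 := by
    intro f hf
    obtain ⟨_, _, hcomp⟩ := hkkt f
    have h0 : -lam0 - θ f * (lam0 / (s0 * eta)) * q f + φ f = 0 := by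
      rcases mul_eq_zero.mp hcomp with h | h
      · exact h
      · exact absurd h (ne_of_gt hf)
    have hslope : lam0 / (s0 * eta) ≤ 0 :=
      div_nonpos_of_nonneg_of_nonpos hlam (le_of_lt (mul_neg_of_pos_of_neg hs0 heta))
    have : θ f * (lam0 / (s0 * eta)) * q f ≤ 0 :=
      mul_nonpos_of_nonpos_of_nonneg
        (mul_nonpos_of_nonneg_of_nonpos (hθ f).1 hslope) (le_of_lt hf)
    nlinarith
  have key2 : ∀ g, q g = 0 → lam0 ≤ φ g := by
    intro g hg
    have := (hkkt g).1
    rw [hg] at this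
    nlinarith
  refine ⟨fun f g hf hg => ⟨key f hf, key2 g hg⟩, fun h1 h2 => ?_⟩
  apply Finset.sup'_le
  intro f hf
  apply Finset.le_inf'
  intro g hg
  simp only [Finset.mem_filter] at hf hg
  exact le_trans (key f hf.2) (key2 g hg.2)
end

section
/- Let F be a finite set, q : F → ℝ with q_f ≥ 0 for all f and s⁰ := Σ_{f∈F} q_f > 0, let φ : F → ℝ, λ⁰ > 0, and η < 0. Assume: (i) φ_f ≤ λ⁰ for every f with q_f > 0; (ii) λ⁰ ≤ φ_f for every f with q_f = 0; and (iii) (−η)·(λ⁰ − φ_f)·s⁰ ≤ λ⁰·q_f for every f with q_f > 0. Let θ : F → ℝ be any function such that θ_f = (λ⁰ − φ_f)·s⁰·(−η)/(λ⁰·q_f) whenever q_f > 0 and 0 ≤ θ_f ≤ 1 whenever q_f = 0. Then 0 ≤ θ_f ≤ 1 for every f ∈ F, and the KKT complementarity condition holds at the anchor point (q, λ⁰) for every trader f ∈ F; that is, the equilibrium (λ⁰, q, s⁰, φ) is achieved with all market power parameters in [0,1]. -/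
/-- If λ⁰ lies in the admissible anchor-price range and (−η) in
    the admissible elasticity range, then the calibrated market power
    parameters lie in [0,1] and the KKT complementarity conditions hold at the
    anchor point for every trader: the equilibrium (λ⁰, q, s⁰, φ) is achieved. -/
theorem stmt_8 {F : Type*} [Fintype F]
    (q φ θ : F → ℝ) (hq : ∀ f, 0 ≤ q f)
    (s0 : ℝ) (hs0 : s0 = ∑ f, q f) (hs0pos : 0 < s0)
    (lam0 eta : ℝ) (hlam : 0 < lam0) (heta : eta < 0)
    (h1 : ∀ f, 0 < q f → φ f ≤ lam0)
    (h2 : ∀ f, q f = 0 → lam0 ≤ φ f)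
    (h3 : ∀ f, 0 < q f → (-eta) * (lam0 - φ f) * s0 ≤ lam0 * q f)
    (hθpos : ∀ f, 0 < q f → θ f = (lam0 - φ f) * s0 * (-eta) / (lam0 * q f))
    (hθzero : ∀ f, q f = 0 → 0 ≤ θ f ∧ θ f ≤ 1) :
    (∀ f, 0 ≤ θ f ∧ θ f ≤ 1) ∧
      ∀ f, -lam0 - θ f * (lam0 / (s0 * eta)) * q f + φ f ≥ 0 ∧ q f ≥ 0 ∧
        (-lam0 - θ f * (lam0 / (s0 * eta)) * q f + φ f) * q f = 0 := by
  constructor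
  · intro f
    rcases eq_or_lt_of_le (hq f) with hqf | hqf
    · exact hθzero f hqf.symm
    · have hθ := hθpos f hqf
      have hden : 0 < lam0 * q f := mul_pos hlam hqf
      constructor
      · rw [hθ]
        apply div_nonneg _ hden.le
        have h1' : 0 ≤ lam0 - φ f := by linarith [h1 f hqf]
        have : (0:ℝ) ≤ -eta := by linarith
        exact mul_nonneg (mul_nonneg h1' hs0pos.le) this
      · rw [hθ, div_le_one hden]
        have := h3 f hqf
        nlinarith
  · intro f
    rcases eq_or_lt_of_le (hq f) with hqf | hqf
    · refine ⟨by simp [← hqf]; linarith [h2 f hqf.symm], hq f, by simp [← hqf]⟩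
    · have hθ := hθpos f hqf
      have hl : lam0 ≠ 0 := hlam.ne'
      have hs : s0 ≠ 0 := hs0pos.ne'
      have he : eta ≠ 0 := heta.ne
      have hqne : q f ≠ 0 := hqf.ne'
      have key : -lam0 - θ f * (lam0 / (s0 * eta)) * q f + φ f = 0 := by
        rw [hθ]
        field_simp
        ring
      exact ⟨key.ge, hq f, by rw [key]; ring⟩
end
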